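/- arXiv:1409.4526 — 2 statements merged into one kernel-verified Lean document; each statement's English description precedes it below -/
import Mathlib

section
/- Let b₁, b₂ ∈ ℤ² be linearly independent vectors, m an integer, and α, β ∈ ℚ the unique rationals with α·b₁ + β·b₂ = (m, 0). Let c' = ⌊α⌉·b₁ + ⌊β⌉·b₂ where ⌊·⌉ denotes rounding to a nearest integer (so |x − ⌊x⌉| ≤ 1/2). Then ‖(m,0) − c'‖∞ ≤ max(‖b₁‖∞, ‖b₂‖∞), where ‖(a,b)‖∞ = max(|a|,|b|). -/
theorem stmt_8 (b₁ b₂ : ℤ × ℤ) (m : ℤ) (α β : ℚ)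
    (hindep : b₁.1 * b₂.2 - b₁.2 * b₂.1 ≠ 0)
    (h1 : α * (b₁.1 : ℚ) + β * (b₂.1 : ℚ) = (m : ℚ))
    (h2 : α * (b₁.2 : ℚ) + β * (b₂.2 : ℚ) = 0) :
    max |m - (round α * b₁.1 + round β * b₂.1)|
        |0 - (round α * b₁.2 + round β * b₂.2)|
      ≤ max (max |b₁.1| |b₁.2|) (max |b₂.1| |b₂.2|) := by
  have hα := abs_sub_round α
  have hβ := abs_sub_round β
  rw [← @Int.cast_le ℚ]
  push_cast
  set M : ℚ := max (max |(b₁.1 : ℚ)| |(b₁.2 : ℚ)|) (max |(b₂.1 : ℚ)| |(b₂.2 : ℚ)|) with hM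
  have hb11 : |(b₁.1 : ℚ)| ≤ M := le_max_of_le_left (le_max_left _ _)
  have hb12 : |(b₁.2 : ℚ)| ≤ M := le_max_of_le_left (le_max_right _ _)
  have hb21 : |(b₂.1 : ℚ)| ≤ M := le_max_of_le_right (le_max_left _ _)
  have hb22 : |(b₂.2 : ℚ)| ≤ M := le_max_of_le_right (le_max_right _ _)
  apply max_le
  · have e : (m : ℚ) - ((round α : ℚ) * b₁.1 + (round β : ℚ) * b₂.1)
        = (α - round α) * b₁.1 + (β - round β) * b₂.1 := by linarith
    rw [e]
    calc |(α - round α) * b₁.1 + (β - round β) * b₂.1|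
        ≤ |α - round α| * |(b₁.1 : ℚ)| + |β - round β| * |(b₂.1 : ℚ)| :=
          (abs_add_le _ _).trans (by rw [abs_mul, abs_mul])
      _ ≤ (1/2) * M + (1/2) * M :=
          add_le_add (mul_le_mul hα hb11 (abs_nonneg _) (by norm_num))
            (mul_le_mul hβ hb21 (abs_nonneg _) (by norm_num))
      _ = M := by ring
  · have e : (0 : ℚ) - ((round α : ℚ) * b₁.2 + (round β : ℚ) * b₂.2)
        = (α - round α) * b₁.2 + (β - round β) * b₂.2 := by linarith
    rw [e]
    calc |(α - round α) * b₁.2 + (β - round β) * b₂.2|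
        ≤ |α - round α| * |(b₁.2 : ℚ)| + |β - round β| * |(b₂.2 : ℚ)| :=
          (abs_add_le _ _).trans (by rw [abs_mul, abs_mul])
      _ ≤ (1/2) * M + (1/2) * M :=
          add_le_add (mul_le_mul hα hb12 (abs_nonneg _) (by norm_num))
            (mul_le_mul hβ hb22 (abs_nonneg _) (by norm_num))
      _ = M := by ring
end

section
/- Let p be an odd prime, ε = ±1, r an odd integer, and write (p + ε)² − 2ε·r² = 2^k·N and (p − ε)² + 2ε·r² = 2^{k'}·N' with N, N' odd. Then either k = k' = 1, or (k = 2 and k' ≥ 3), or (k ≥ 3 and k' = 2). -/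
lemma aux13 (k : ℕ) (N M : ℤ) (hN : Odd N) (hM : Odd M) (h : 2 ^ k * N = 2 * M) : k = 1 := by
  obtain ⟨a, ha⟩ := hN
  obtain ⟨b, hb⟩ := hM
  match k with
  | 0 => simp at h; omega
  | 1 => rfl
  | (n+2) =>
    exfalso
    have he : (2:ℤ)^(n+2) = 2*(2*2^n) := by ring
    rw [he, mul_assoc] at h
    have h2 : 2 * 2^n * N = M := mul_left_cancel₀ (by norm_num) h
    have hd : (2:ℤ) ∣ M := ⟨2^n * N, by rw [← h2]; ring⟩
    omega

theorem stmt_13 (p ε r N N' : ℤ) (k k' : ℕ) (hp : Prime p) (hpodd : Odd p)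
    (hε : ε = 1 ∨ ε = -1) (hr : Odd r) (hN : Odd N) (hN' : Odd N')
    (h : (p + ε) ^ 2 - 2 * ε * r ^ 2 = 2 ^ k * N)
    (h' : (p - ε) ^ 2 + 2 * ε * r ^ 2 = 2 ^ k' * N') :
    (k = 1 ∧ k' = 1) ∨ (k = 2 ∧ 3 ≤ k') ∨ (3 ≤ k ∧ k' = 2) := by
  obtain ⟨m, hm⟩ := hpodd
  obtain ⟨s, hs⟩ := hr
  subst hm hs
  left
  rcases hε with hε | hε <;> subst hε
  · refine ⟨aux13 k N (2*(m+1)^2 - (2*s+1)^2) hN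
      ⟨(m+1)^2 - 2*s^2 - 2*s - 1, by ring⟩ (by linear_combination -h), ?_⟩
    exact aux13 k' N' (2*m^2 + (2*s+1)^2) hN'
      ⟨m^2 + 2*s^2 + 2*s, by ring⟩ (by linear_combination -h')
  · refine ⟨aux13 k N (2*m^2 + (2*s+1)^2) hN
      ⟨m^2 + 2*s^2 + 2*s, by ring⟩ (by linear_combination -h), ?_⟩
    exact aux13 k' N' (2*(m+1)^2 - (2*s+1)^2) hN'
      ⟨(m+1)^2 - 2*s^2 - 2*s - 1, by ring⟩ (by linear_combination -h')
end
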